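/- Suppose S_k, I_k, D_k, Θ_k > 0 for all k ∈ K satisfy β_k S_k Θ_k = (r_k+γ_k)(I_k+D_k), σ_k β_k I_k Θ_k = (r_k+γ_k) D_k, and Θ = Q(I+D). Define the (2p)×(2p) block matrix A^* with 2×2 blocks A_{ks} = q_{ks} B_k − δ_{ks} C_k, where B_k = β_k [[S_k, S_k],[σ_k I_k/2, σ_k I_k/2]] and C_k = (γ_k+r_k)·Id_2 + σ_k β_k Θ_k·[[1,0],[−1/2,0]]. Then A^* X^* = 0, where X^* = ((I_k, D_k)^T)_{k∈K} ∈ ℝ^{2p}. -/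

import Mathlib

open Matrix

/-- The neutral matrix `A*` with blocks `A_{ks} = q_{ks} B_k − δ_{ks} C_k`
annihilates the stationary vector `X* = ((I_k, D_k))_{k}`. -/
theorem neutral_matrix_kills_Xstar {K : Type*} [Fintype K] [DecidableEq K] [Nonempty K]
    (β r γ σ : K → ℝ) (hβ : ∀ k, 0 < β k) (hr : ∀ k, 0 < r k)
    (hγ : ∀ k, 0 < γ k) (hσ : ∀ k, 0 < σ k)
    (Q : Matrix K K ℝ) (hQ : ∀ k s, 0 ≤ Q k s)
    (S I D Θ : K → ℝ)
    (hSpos : ∀ k, 0 < S k) (hIpos : ∀ k, 0 < I k)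
    (hDpos : ∀ k, 0 < D k) (hΘpos : ∀ k, 0 < Θ k)
    (heq1 : ∀ k, β k * S k * Θ k = (r k + γ k) * (I k + D k))
    (heq2 : ∀ k, σ k * β k * I k * Θ k = (r k + γ k) * D k)
    (hΘ : ∀ k, Θ k = ∑ s, Q k s * (I s + D s))
    (B C : K → Matrix (Fin 2) (Fin 2) ℝ)
    (hB : ∀ k, B k = β k • !![S k, S k; σ k * I k / 2, σ k * I k / 2])
    (hC : ∀ k, C k = (γ k + r k) • (1 : Matrix (Fin 2) (Fin 2) ℝ) +
      (σ k * β k * Θ k) • !![1, 0; -(1/2 : ℝ), 0])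
    (A : Matrix (K × Fin 2) (K × Fin 2) ℝ)
    (hA : ∀ k s a b, A (k, a) (s, b) = Q k s * B k a b - (if k = s then C k a b else 0))
    (X : K × Fin 2 → ℝ)
    (hX : ∀ k, X (k, 0) = I k ∧ X (k, 1) = D k) :
    A.mulVec X = 0 := by
  funext x
  obtain ⟨k, a⟩ := x
  have hX0 : ∀ s, X (s, 0) = I s := fun s => (hX s).1
  have hX1 : ∀ s, X (s, 1) = D s := fun s => (hX s).2
  have key : ∀ c : ℝ, ∑ x, Q k x * c * I x + ∑ x, Q k x * c * D x = c * Θ k := by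
    intro c
    rw [hΘ, Finset.mul_sum, ← Finset.sum_add_distrib]
    exact Finset.sum_congr rfl fun x _ => by ring
  simp only [mulVec, dotProduct, Pi.zero_apply, Fintype.sum_prod_type_right,
    Fin.sum_univ_two, hA, hX0, hX1, sub_mul, ite_mul, zero_mul,
    Finset.sum_sub_distrib, Finset.sum_ite_eq, Finset.mem_univ, if_true]
  fin_cases a <;>
    simp only [hB, hC, Matrix.smul_apply, Matrix.add_apply, one_apply, Matrix.cons_val',
      Matrix.cons_val_zero, Matrix.cons_val_one, Matrix.head_cons, Matrix.head_fin_const,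
      Matrix.empty_val', Matrix.cons_val_fin_one, smul_eq_mul, if_true, if_pos rfl,
      mul_zero, mul_one, Fin.zero_eta, Fin.mk_one, Matrix.one_apply_eq]
  · have h := key (β k * S k)
    have h1 := heq1 k
    norm_num
    linear_combination h + h1 - heq2 k
  · have h := key (β k * (σ k * I k / 2))
    have h2 := heq2 k
    norm_num
    linear_combination h + heq2 k
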